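/- Let p be a prime, l ≥ 2, m = p^l, and j_1, ..., j_m ≥ 1 integers with v_p(j_1! ⋯ j_m!) = v_p(⌊(j_1+...+j_m)/p^l⌋) (and this common value finite). Then j_i ≤ p-1 for all i = 1, ..., m. -/

import Mathlib

open Finset

private lemma bern' (p V : ℕ) (hp : 1 ≤ p) : V * (p - 1) + 1 ≤ p ^ V := by
  induction V with
  | zero => simp
  | succ n ih =>
    obtain ⟨r, rfl⟩ : ∃ r, p = r + 1 := ⟨p - 1, by omega⟩
    simp only [Nat.add_sub_cancel] at *
    have h1 : 1 ≤ (r + 1) ^ n := Nat.one_le_pow _ _ hp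
    have h2 : r ≤ (r + 1) ^ n * r := Nat.le_mul_of_pos_left _ h1
    have h3 : (r + 1) ^ (n + 1) = (r + 1) ^ n + (r + 1) ^ n * r := by ring
    calc (n + 1) * r + 1 = (n * r + 1) + r := by ring
    _ ≤ (r + 1) ^ n + (r + 1) ^ n * r := Nat.add_le_add ih h2
    _ = (r + 1) ^ (n + 1) := h3.symm

private lemma aux' (p l V : ℕ) (hp : 2 ≤ p) (hl : 2 ≤ l) (hV : 1 ≤ V)
    (h : p ^ l * p ^ V ≤ V * p + p ^ l * (p - 1)) : False := by
  have hb := bern' p V (by omega)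
  have hl2 : p ^ 2 ≤ p ^ l := Nat.pow_le_pow_right (by omega) hl
  have h1 : p ^ l * (V * (p - 1) + 1) ≤ p ^ l * p ^ V := Nat.mul_le_mul_left _ hb
  obtain ⟨q, rfl⟩ : ∃ q, p = q + 2 := ⟨p - 2, by omega⟩
  obtain ⟨W, rfl⟩ : ∃ W, V = W + 1 := ⟨V - 1, by omega⟩
  have hq : (q + 2) - 1 = q + 1 := by omega
  rw [hq] at h h1
  set A := (q + 2) ^ l with hA
  have h2 : A * W * (q + 1) + A * (q + 1) + A ≤ (W + 1) * (q + 2) + A * (q + 1) := by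
    calc A * W * (q + 1) + A * (q + 1) + A = A * ((W + 1) * (q + 1) + 1) := by ring
    _ ≤ (W + 1) * (q + 2) + A * (q + 1) := h1.trans h
  have hAq : q * q + 4 * q + 4 ≤ A := by
    calc q * q + 4 * q + 4 = (q + 2) ^ 2 := by ring
    _ ≤ A := hl2
  have hA3 : q + 3 ≤ A := by nlinarith
  have c2 : W * (q + 2) ≤ A * W * (q + 1) := by
    calc W * (q + 2) = (q + 2) * W * 1 := by ring
    _ ≤ A * W * (q + 1) := by
        apply Nat.mul_le_mul (Nat.mul_le_mul _ le_rfl) (by omega)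
        nlinarith
  have e1 : (W + 1) * (q + 2) = W * (q + 2) + q + 2 := by ring
  linarith

theorem stmt_5 (p l : ℕ) (hp : p.Prime) (hl : 2 ≤ l)
    (j : Fin (p ^ l) → ℕ) (hj : ∀ i, 1 ≤ j i)
    (heq : padicValNat p (∏ i, Nat.factorial (j i)) = padicValNat p ((∑ i, j i) / p ^ l)) :
    ∀ i, j i ≤ p - 1 := by
  haveI : Fact p.Prime := ⟨hp⟩
  have hp2 : 2 ≤ p := hp.two_le
  by_contra hcon
  push_neg at hcon
  obtain ⟨k, hk⟩ := hcon
  have hpk : p ≤ j k := by omega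
  set S := ∑ i, j i with hS
  set V := ∑ i, padicValNat p ((j i).factorial) with hVdef
  -- product valuation = sum
  have hprod : padicValNat p (∏ i, Nat.factorial (j i)) = V := by
    rw [← Nat.factorization_def _ hp, Nat.factorization_prod (fun x _ => (Nat.factorial_ne_zero _))]
    simp only [Finset.sum_apply', Nat.factorization_def _ hp]
    rfl
  rw [hprod] at heq
  -- V ≥ 1
  have hVk : 1 ≤ padicValNat p ((j k).factorial) :=
    one_le_padicValNat_of_dvd (Nat.factorial_pos _).ne' (Nat.dvd_factorial hp.pos hpk)
  have hV1 : 1 ≤ V := le_trans hVk (Finset.single_le_sum (f := fun i => padicValNat p ((j i).factorial)) (fun i _ => Nat.zero_le _) (Finset.mem_univ k))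
  -- S ≥ p^l
  have hSlb : p ^ l ≤ S := by
    calc p ^ l = ∑ _i : Fin (p ^ l), 1 := by simp
    _ ≤ S := Finset.sum_le_sum (fun i _ => hj i)
  -- S / p^l ≥ p^V
  have hTpos : 0 < S / p ^ l := (Nat.one_le_div_iff (by positivity)).mpr hSlb
  have hdvd : p ^ V ∣ S / p ^ l := heq ▸ pow_padicValNat_dvd
  have hT : p ^ V ≤ S / p ^ l := Nat.le_of_dvd hTpos hdvd
  have hSbig : p ^ l * p ^ V ≤ S := by
    calc p ^ l * p ^ V ≤ p ^ l * (S / p ^ l) := Nat.mul_le_mul_left _ hT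
    _ ≤ S := Nat.mul_div_le S (p ^ l)
  -- valuation lower bound per term: j i / p ≤ v_p((j i)!)
  have hterm : ∀ i : Fin (p ^ l), j i / p ≤ padicValNat p ((j i).factorial) := by
    intro i
    rw [padicValNat_factorial (n := j i) (b := Nat.log p (j i) + 1) (Nat.lt_succ_self _)]
    rcases Nat.lt_or_ge (j i) p with h | h
    · simp [Nat.div_eq_of_lt h]
    · have h1 : 1 ∈ Finset.Ico 1 (Nat.log p (j i) + 1) := by
        simp only [Finset.mem_Ico]
        constructor
        · exact le_refl 1
        · have := Nat.log_pos (by omega : 1 < p) h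
          omega
      calc j i / p = j i / p ^ 1 := by rw [pow_one]
      _ ≤ ∑ m ∈ Finset.Ico 1 (Nat.log p (j i) + 1), j i / p ^ m :=
          Finset.single_le_sum (f := fun m => j i / p ^ m) (fun m _ => Nat.zero_le _) h1
  -- S ≤ V * p + p^l * (p-1)
  have hup : ∀ i : Fin (p ^ l), j i ≤ (j i / p) * p + (p - 1) := by
    intro i
    have := Nat.lt_div_mul_add (a := j i) (b := p) hp.pos
    omega
  have hSub : S ≤ V * p + p ^ l * (p - 1) := by
    calc S ≤ ∑ i, ((j i / p) * p + (p - 1)) := Finset.sum_le_sum (fun i _ => hup i)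
    _ = (∑ i, j i / p) * p + p ^ l * (p - 1) := by
        rw [Finset.sum_add_distrib, Finset.sum_mul]
        simp [mul_comm]
    _ ≤ V * p + p ^ l * (p - 1) := by
        have : (∑ i, j i / p) ≤ V := Finset.sum_le_sum (fun i _ => hterm i)
        exact Nat.add_le_add_right (Nat.mul_le_mul_right _ this) _
  exact aux' p l V hp2 hl hV1 (hSbig.trans hSub)
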